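/- For every integer j, G_j^4 − G_{j−2}·G_{j−1}·G_{j+1}·G_{j+2} = λ², i.e. the Gelin–Cesàro identity holds for every gibonacci sequence. -/

import Mathlib

theorem gelin_cesaro (G : ℤ → ℤ) (hG : ∀ k : ℤ, G (k + 2) = G (k + 1) + G k) (j : ℤ) :
    G j ^ 4 - G (j - 2) * G (j - 1) * G (j + 1) * G (j + 2) = (G 1 ^ 2 - G 0 * G 2) ^ 2 := by
  have inv : ∀ k : ℤ, (G (k + 1) ^ 2 - G k * G (k + 2)) ^ 2 = (G 1 ^ 2 - G 0 * G 2) ^ 2 := by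
    have step : ∀ k : ℤ, G (k + 2) ^ 2 - G (k + 1) * G (k + 3) =
        -(G (k + 1) ^ 2 - G k * G (k + 2)) := by
      intro k
      have h1 := hG k
      have h2 := hG (k + 1)
      have : k + 1 + 2 = k + 3 := by ring
      rw [this] at h2
      have e : k + 1 + 1 = k + 2 := by ring
      rw [e] at h2
      rw [h2, h1]; ring
    intro k
    induction k using Int.induction_on with
    | zero => norm_num
    | succ n ih =>
      have := step n
      have e1 : (n : ℤ) + 1 + 1 = n + 2 := by ring
      have e2 : (n : ℤ) + 1 + 2 = n + 3 := by ring
      rw [e1, e2, this]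
      rw [← ih]; ring
    | pred n ih =>
      have := step (-(n : ℤ) - 1)
      have e1 : -(n : ℤ) - 1 + 1 = -n := by ring
      have e2 : -(n : ℤ) - 1 + 2 = -n + 1 := by ring
      have e3 : -(n : ℤ) - 1 + 3 = -n + 2 := by ring
      rw [e1, e2, e3] at this
      rw [e1, e2, ← ih, this]; ring
  have h1 := hG (j - 2)
  have h2 := hG (j - 1)
  have e1 : j - 2 + 2 = j := by ring
  have e2 : j - 2 + 1 = j - 1 := by ring
  have e3 : j - 1 + 2 = j + 1 := by ring
  have e4 : j - 1 + 1 = j := by ring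
  rw [e1, e2] at h1
  rw [e3, e4] at h2
  have h3 := hG j
  have key := inv (j - 2)
  rw [e1, e2] at key
  rw [h1] at key
  rw [h3, h2, h1]
  linear_combination key
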